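/- arXiv:1203.2474 — 5 statements merged into one kernel-verified Lean document; each statement's English description precedes it below -/
import Mathlib

section
/- Let D be a weak braided Hopf algebra and (r_M, r'_M, s_M, s'_M) an (M,D)-weak operator. Then the morphisms ∇_{r_M} := r'_M ∘ r_M, ∇_{r'_M} := r_M ∘ r'_M, ∇_{s_M} := s'_M ∘ s_M and ∇_{s'_M} := s_M ∘ s'_M are idempotent. -/
open CategoryTheory MonoidalCategory

variable {C : Type*} [Category C] [MonoidalCategory C]

/-- Whisker a morphism between binary tensor products into the first two factors
of a right-nested triple tensor product (strict monoidal `f ⊗ Z`). -/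
def Wfst {X X' Y Y' : C} (f : X ⊗ Y ⟶ X' ⊗ Y') (Z : C) :
    X ⊗ (Y ⊗ Z) ⟶ X' ⊗ (Y' ⊗ Z) :=
  (α_ X Y Z).inv ≫ (f ▷ Z) ≫ (α_ X' Y' Z).hom

/-- `η ⊗ M` in a strict monoidal category. -/
def unitHomL {X : C} (e : 𝟙_ C ⟶ X) (M : C) : M ⟶ X ⊗ M := (λ_ M).inv ≫ e ▷ M

/-- `M ⊗ η` in a strict monoidal category. -/
def unitHomR {X : C} (e : 𝟙_ C ⟶ X) (M : C) : M ⟶ M ⊗ X := (ρ_ M).inv ≫ M ◁ e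

/-- `ε ⊗ M` in a strict monoidal category. -/
def counitHomL {X : C} (e : X ⟶ 𝟙_ C) (M : C) : X ⊗ M ⟶ M := e ▷ M ≫ (λ_ M).hom

/-- `M ⊗ ε` in a strict monoidal category. -/
def counitHomR {X : C} (e : X ⟶ 𝟙_ C) (M : C) : M ⊗ X ⟶ M := M ◁ e ≫ (ρ_ M).hom

/-- A weak Yang-Baxter operator on `D`: `t` satisfies the Yang–Baxter equation,
`nb` is an associated idempotent (conditions (a2-1)–(a2-4)), and `t'` is a partial
inverse of `t` ((a3-1) and (a3-2)), where the splitting of `nb` required by (a3-1)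
is asserted to exist. -/
structure IsWYB {D : C} (t t' nb : D ⊗ D ⟶ D ⊗ D) : Prop where
  yb : Wfst t D ≫ (D ◁ t) ≫ Wfst t D = (D ◁ t) ≫ Wfst t D ≫ (D ◁ t)
  nb_idem : nb ≫ nb = nb
  a21 : (D ◁ nb) ≫ Wfst nb D = Wfst nb D ≫ (D ◁ nb)
  a22 : (D ◁ t) ≫ Wfst nb D = Wfst nb D ≫ (D ◁ t)
  a23 : (D ◁ nb) ≫ Wfst t D = Wfst t D ≫ (D ◁ nb)
  a24l : nb ≫ t = t
  a24r : t ≫ nb = t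
  a32l : nb ≫ t' = t'
  a32r : t' ≫ nb = t'
  a31 : ∃ (P : C) (p : D ⊗ D ⟶ P) (i : P ⟶ D ⊗ D),
      p ≫ i = nb ∧ i ≫ p = 𝟙 P ∧
      (i ≫ t ≫ p) ≫ (i ≫ t' ≫ p) = 𝟙 P ∧ (i ≫ t' ≫ p) ≫ (i ≫ t ≫ p) = 𝟙 P

variable (D : C) in
/-- A weak braided Hopf algebra in a strict monoidal category: an algebra-coalgebra
`(D, η, μ, ε, δ)` with a weak Yang-Baxter operator `t` (with partial inverse `t'`
and associated idempotent `nb`) satisfying axioms (b1)-(b7), with antipode `S`. -/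
structure WBHA where
  η : 𝟙_ C ⟶ D
  μ : D ⊗ D ⟶ D
  ε : D ⟶ 𝟙_ C
  δ : D ⟶ D ⊗ D
  S : D ⟶ D
  t : D ⊗ D ⟶ D ⊗ D
  t' : D ⊗ D ⟶ D ⊗ D
  nb : D ⊗ D ⟶ D ⊗ D
  wyb : IsWYB t t' nb
  unit_l : unitHomL η D ≫ μ = 𝟙 D
  unit_r : unitHomR η D ≫ μ = 𝟙 D
  mul_assoc : D ◁ μ ≫ μ = (α_ D D D).inv ≫ μ ▷ D ≫ μ
  counit_l : δ ≫ counitHomL ε D = 𝟙 D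
  counit_r : δ ≫ counitHomR ε D = 𝟙 D
  coassoc : δ ≫ D ◁ δ = δ ≫ δ ▷ D ≫ (α_ D D D).hom
  b11 : nb ≫ μ = μ
  b12 : ((α_ D D D).inv ≫ μ ▷ D) ≫ nb = D ◁ nb ≫ (α_ D D D).inv ≫ μ ▷ D
  b13 : D ◁ μ ≫ nb = Wfst nb D ≫ D ◁ μ
  b21 : δ ≫ nb = δ
  b22 : nb ≫ δ ▷ D ≫ (α_ D D D).hom = (δ ▷ D ≫ (α_ D D D).hom) ≫ D ◁ nb
  b23 : nb ≫ D ◁ δ = D ◁ δ ≫ Wfst nb D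
  b31 : ((α_ D D D).inv ≫ μ ▷ D) ≫ t = D ◁ t ≫ Wfst t D ≫ D ◁ μ
  b32 : D ◁ μ ≫ t = Wfst t D ≫ D ◁ t ≫ (α_ D D D).inv ≫ μ ▷ D
  b33 : t ≫ δ ▷ D ≫ (α_ D D D).hom = D ◁ δ ≫ Wfst t D ≫ D ◁ t
  b34 : t ≫ D ◁ δ = (δ ▷ D ≫ (α_ D D D).hom) ≫ D ◁ t ≫ Wfst t D
  b4 : μ ≫ δ = (δ ⊗ₘ δ) ≫ (α_ D D (D ⊗ D)).hom ≫ D ◁ Wfst t D ≫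
      (α_ D D (D ⊗ D)).inv ≫ (μ ⊗ₘ μ)
  b51 : ((α_ D D D).inv ≫ μ ▷ D) ≫ μ ≫ ε =
      D ◁ (δ ▷ D ≫ (α_ D D D).hom) ≫ (α_ D D (D ⊗ D)).inv ≫
        ((μ ≫ ε) ⊗ₘ (μ ≫ ε)) ≫ (λ_ (𝟙_ C)).hom
  b52 : ((α_ D D D).inv ≫ μ ▷ D) ≫ μ ≫ ε =
      D ◁ ((δ ≫ t') ▷ D ≫ (α_ D D D).hom) ≫ (α_ D D (D ⊗ D)).inv ≫
        ((μ ≫ ε) ⊗ₘ (μ ≫ ε)) ≫ (λ_ (𝟙_ C)).hom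
  b61 : η ≫ δ ≫ δ ▷ D ≫ (α_ D D D).hom =
      (λ_ (𝟙_ C)).inv ≫ ((η ≫ δ) ⊗ₘ (η ≫ δ)) ≫ (α_ D D (D ⊗ D)).hom ≫
        D ◁ ((α_ D D D).inv ≫ μ ▷ D)
  b62 : η ≫ δ ≫ δ ▷ D ≫ (α_ D D D).hom =
      (λ_ (𝟙_ C)).inv ≫ ((η ≫ δ) ⊗ₘ (η ≫ δ)) ≫ (α_ D D (D ⊗ D)).hom ≫
        D ◁ ((α_ D D D).inv ≫ (t' ≫ μ) ▷ D)
  b71 : δ ≫ (𝟙 D ⊗ₘ S) ≫ μ =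
      (λ_ D).inv ≫ (η ≫ δ) ▷ D ≫ (α_ D D D).hom ≫ D ◁ t ≫
        (α_ D D D).inv ≫ (μ ≫ ε) ▷ D ≫ (λ_ D).hom
  b72 : δ ≫ (S ⊗ₘ 𝟙 D) ≫ μ =
      (ρ_ D).inv ≫ D ◁ (η ≫ δ) ≫ Wfst t D ≫ D ◁ (μ ≫ ε) ≫ (ρ_ D).hom
  b73 : δ ≫ (S ⊗ₘ (δ ≫ (𝟙 D ⊗ₘ S) ≫ μ)) ≫ μ = S

section WeakOperatorDefs

variable {D M : C}

/-- Hexagon-type compatibility of `t : D⊗D ⟶ D⊗D` with `a : M⊗D ⟶ D⊗M`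
(conditions (c1-1), (c1-4)). -/
def hexMD (t : D ⊗ D ⟶ D ⊗ D) (a : M ⊗ D ⟶ D ⊗ M) : Prop :=
  M ◁ t ≫ Wfst a D ≫ D ◁ a = Wfst a D ≫ D ◁ a ≫ Wfst t M

/-- Hexagon-type compatibility of `t` with `b : D⊗M ⟶ M⊗D` ((c1-2), (c1-3)). -/
def hexDM (t : D ⊗ D ⟶ D ⊗ D) (b : D ⊗ M ⟶ M ⊗ D) : Prop :=
  Wfst t M ≫ D ◁ b ≫ Wfst b D = D ◁ b ≫ Wfst b D ≫ M ◁ t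

/-- Mixed Yang-Baxter equation shape ((c2-1), (c2-2)). -/
def mixDM (t : D ⊗ D ⟶ D ⊗ D) (b c : D ⊗ M ⟶ M ⊗ D) : Prop :=
  Wfst t M ≫ D ◁ c ≫ Wfst b D = D ◁ b ≫ Wfst c D ≫ M ◁ t

/-- Mixed Yang-Baxter equation shape ((c2-3), (c2-4)). -/
def mixMD (t : D ⊗ D ⟶ D ⊗ D) (a c : M ⊗ D ⟶ D ⊗ M) : Prop :=
  M ◁ t ≫ Wfst a D ≫ D ◁ c = Wfst c D ≫ D ◁ a ≫ Wfst t M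

end WeakOperatorDefs

variable {D : C} (H : WBHA D) (M : C) in
/-- An `(M,D)`-weak operator for a weak braided Hopf algebra `D`: a quadruple
`(r, r', s, s')` satisfying the compatibility conditions (c1)-(c5). -/
structure WeakOperator where
  r : M ⊗ D ⟶ D ⊗ M
  r' : D ⊗ M ⟶ M ⊗ D
  s : D ⊗ M ⟶ M ⊗ D
  s' : M ⊗ D ⟶ D ⊗ M
  c11 : hexMD H.t r
  c12 : hexDM H.t r'
  c13 : hexDM H.t s
  c14 : hexMD H.t s'
  c11' : hexMD H.t' r
  c12' : hexDM H.t' r'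
  c13' : hexDM H.t' s
  c14' : hexMD H.t' s'
  c21 : mixDM H.t r' s
  c22 : mixDM H.t' s r'
  c23 : mixMD H.t r s'
  c24 : mixMD H.t' s' r
  c31a : r ≫ r' = M ◁ H.δ ≫ (α_ M D D).inv ≫ (r ≫ counitHomL H.ε M) ▷ D
  c31b : r ≫ r' = (unitHomL H.η M ≫ r') ▷ D ≫ (α_ M D D).hom ≫ M ◁ H.μ
  c32a : r' ≫ r = H.δ ▷ M ≫ (α_ D D M).hom ≫ D ◁ (r' ≫ counitHomR H.ε M)
  c32b : r' ≫ r = D ◁ (unitHomR H.η M ≫ r) ≫ (α_ D D M).inv ≫ H.μ ▷ M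
  c33a : s ≫ s' = H.δ ▷ M ≫ (α_ D D M).hom ≫ D ◁ (s ≫ counitHomR H.ε M)
  c33b : s ≫ s' = D ◁ (unitHomR H.η M ≫ s') ≫ (α_ D D M).inv ≫ H.μ ▷ M
  c34a : s' ≫ s = M ◁ H.δ ≫ (α_ M D D).inv ≫ (s' ≫ counitHomL H.ε M) ▷ D
  c34b : s' ≫ s = (unitHomL H.η M ≫ s) ▷ D ≫ (α_ M D D).hom ≫ M ◁ H.μ
  c41 : M ◁ H.μ ≫ r = Wfst r D ≫ D ◁ r ≫ (α_ D D M).inv ≫ H.μ ▷ M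
  c42 : ((α_ D D M).inv ≫ H.μ ▷ M) ≫ r' = D ◁ r' ≫ Wfst r' D ≫ M ◁ H.μ
  c43 : M ◁ H.δ ≫ Wfst r D ≫ D ◁ r = r ≫ H.δ ▷ M ≫ (α_ D D M).hom
  c44 : (H.δ ▷ M ≫ (α_ D D M).hom) ≫ D ◁ r' ≫ Wfst r' D = r' ≫ M ◁ H.δ
  c45 : ((α_ D D M).inv ≫ H.μ ▷ M) ≫ s = D ◁ s ≫ Wfst s D ≫ M ◁ H.μ
  c46 : M ◁ H.μ ≫ s' = Wfst s' D ≫ D ◁ s' ≫ (α_ D D M).inv ≫ H.μ ▷ M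
  c47 : (H.δ ▷ M ≫ (α_ D D M).hom) ≫ D ◁ s ≫ Wfst s D = s ≫ M ◁ H.δ
  c48 : M ◁ H.δ ≫ Wfst s' D ≫ D ◁ s' = s' ≫ H.δ ▷ M ≫ (α_ D D M).hom
  c51 : (r ≫ r') ≫ M ◁ H.S = M ◁ H.S ≫ (r ≫ r')
  c52 : (r' ≫ r) ≫ H.S ▷ M = H.S ▷ M ≫ (r' ≫ r)
  c53 : (s ≫ s') ≫ H.S ▷ M = H.S ▷ M ≫ (s ≫ s')
  c54 : (s' ≫ s) ≫ M ◁ H.S = M ◁ H.S ≫ (s' ≫ s)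


section AuxCounit

lemma counitR_collapse {D M N : C} (ε : D ⟶ 𝟙_ C) (δ : D ⟶ D ⊗ D)
    (h : δ ≫ counitHomR ε D = 𝟙 D) (f : M ⊗ D ⟶ N) :
    M ◁ δ ≫ (α_ M D D).inv ≫ f ▷ D ≫ counitHomR ε N = f := by
  simp only [counitHomR] at h ⊢
  rw [← whisker_exchange_assoc, rightUnitor_naturality,
    ← associator_inv_naturality_right_assoc, ← whiskerLeft_rightUnitor_assoc,
    ← MonoidalCategory.whiskerLeft_comp_assoc, ← MonoidalCategory.whiskerLeft_comp_assoc,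
    Category.assoc, h, MonoidalCategory.whiskerLeft_id, Category.id_comp]

lemma counitL_collapse {D M N : C} (ε : D ⟶ 𝟙_ C) (δ : D ⟶ D ⊗ D)
    (h : δ ≫ counitHomL ε D = 𝟙 D) (f : D ⊗ M ⟶ N) :
    δ ▷ M ≫ (α_ D D M).hom ≫ D ◁ f ≫ counitHomL ε N = f := by
  simp only [counitHomL] at h ⊢
  rw [whisker_exchange_assoc, leftUnitor_naturality,
    ← associator_naturality_left_assoc, ← leftUnitor_whiskerRight_assoc,
    ← comp_whiskerRight_assoc, ← comp_whiskerRight_assoc,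
    Category.assoc, h, id_whiskerRight, Category.id_comp]

lemma counitL_id {D : C} (M : C) (ε : D ⟶ 𝟙_ C) (δ : D ⟶ D ⊗ D)
    (h : δ ≫ counitHomL ε D = 𝟙 D) :
    M ◁ δ ≫ (α_ M D D).inv ≫ (counitHomR ε M) ▷ D = 𝟙 (M ⊗ D) := by
  simp only [counitHomL] at h
  simp only [counitHomR, comp_whiskerRight]
  rw [← associator_inv_naturality_middle_assoc, triangle_assoc_comp_right,
    ← MonoidalCategory.whiskerLeft_comp, ← MonoidalCategory.whiskerLeft_comp,
    h, MonoidalCategory.whiskerLeft_id]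

lemma counitR_id {D : C} (M : C) (ε : D ⟶ 𝟙_ C) (δ : D ⟶ D ⊗ D)
    (h : δ ≫ counitHomR ε D = 𝟙 D) :
    δ ▷ M ≫ (α_ D D M).hom ≫ D ◁ (counitHomL ε M) = 𝟙 (D ⊗ M) := by
  simp only [counitHomR] at h
  simp only [counitHomL, MonoidalCategory.whiskerLeft_comp]
  rw [← associator_naturality_middle_assoc, triangle,
    ← comp_whiskerRight, ← comp_whiskerRight, h, id_whiskerRight]

end AuxCounit

lemma weakOperator_r_regular {D : C} (H : WBHA D) (M : C)
    (w : WeakOperator H M) : w.r ≫ (w.r' ≫ w.r) = w.r := by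
  have star : (w.r ≫ w.r') ≫ counitHomR H.ε M = w.r ≫ counitHomL H.ε M := by
    rw [w.c31a]
    simp only [Category.assoc]
    exact counitR_collapse H.ε H.δ H.counit_r _
  rw [w.c32a]
  calc w.r ≫ H.δ ▷ M ≫ (α_ D D M).hom ≫ D ◁ (w.r' ≫ counitHomR H.ε M)
      = (M ◁ H.δ ≫ Wfst w.r D ≫ D ◁ w.r) ≫ D ◁ (w.r' ≫ counitHomR H.ε M) := by
        rw [w.c43]; simp only [Category.assoc]
    _ = M ◁ H.δ ≫ Wfst w.r D ≫ D ◁ ((w.r ≫ w.r') ≫ counitHomR H.ε M) := by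
        simp only [Category.assoc, ← MonoidalCategory.whiskerLeft_comp]
    _ = M ◁ H.δ ≫ Wfst w.r D ≫ D ◁ (w.r ≫ counitHomL H.ε M) := by rw [star]
    _ = (M ◁ H.δ ≫ Wfst w.r D ≫ D ◁ w.r) ≫ D ◁ counitHomL H.ε M := by
        simp only [Category.assoc, MonoidalCategory.whiskerLeft_comp]
    _ = w.r ≫ H.δ ▷ M ≫ (α_ D D M).hom ≫ D ◁ counitHomL H.ε M := by
        rw [w.c43]; simp only [Category.assoc]
    _ = w.r := by
        rw [show H.δ ▷ M ≫ (α_ D D M).hom ≫ D ◁ counitHomL H.ε M = 𝟙 (D ⊗ M) from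
          counitR_id M H.ε H.δ H.counit_r, Category.comp_id]

lemma weakOperator_s_regular {D : C} (H : WBHA D) (M : C)
    (w : WeakOperator H M) : w.s ≫ (w.s' ≫ w.s) = w.s := by
  have star : (w.s ≫ w.s') ≫ counitHomL H.ε M = w.s ≫ counitHomR H.ε M := by
    rw [w.c33a]
    simp only [Category.assoc]
    exact counitL_collapse H.ε H.δ H.counit_l _
  rw [w.c34a]
  calc w.s ≫ M ◁ H.δ ≫ (α_ M D D).inv ≫ (w.s' ≫ counitHomL H.ε M) ▷ D
      = (H.δ ▷ M ≫ (α_ D D M).hom ≫ D ◁ w.s ≫ Wfst w.s D) ≫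
          (α_ M D D).inv ≫ (w.s' ≫ counitHomL H.ε M) ▷ D := by
        rw [← Category.assoc, ← w.c47]; simp only [Category.assoc]
    _ = H.δ ▷ M ≫ (α_ D D M).hom ≫ D ◁ w.s ≫ (α_ D M D).inv ≫
          ((w.s ≫ w.s') ≫ counitHomL H.ε M) ▷ D := by
        simp only [Wfst, Category.assoc, Iso.hom_inv_id_assoc, comp_whiskerRight]
    _ = H.δ ▷ M ≫ (α_ D D M).hom ≫ D ◁ w.s ≫ (α_ D M D).inv ≫
          (w.s ≫ counitHomR H.ε M) ▷ D := by rw [star]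
    _ = (H.δ ▷ M ≫ (α_ D D M).hom ≫ D ◁ w.s ≫ Wfst w.s D) ≫
          (α_ M D D).inv ≫ (counitHomR H.ε M) ▷ D := by
        simp only [Wfst, Category.assoc, Iso.hom_inv_id_assoc, comp_whiskerRight]
    _ = w.s ≫ M ◁ H.δ ≫ (α_ M D D).inv ≫ (counitHomR H.ε M) ▷ D := by
        have c47' : H.δ ▷ M ≫ (α_ D D M).hom ≫ D ◁ w.s ≫ Wfst w.s D = w.s ≫ M ◁ H.δ := by
          simpa only [Category.assoc] using w.c47
        rw [c47']; simp only [Category.assoc]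
    _ = w.s := by
        rw [show M ◁ H.δ ≫ (α_ M D D).inv ≫ (counitHomR H.ε M) ▷ D = 𝟙 (M ⊗ D) from
          counitL_id M H.ε H.δ H.counit_l, Category.comp_id]

/-- For an `(M,D)`-weak operator over a weak braided Hopf algebra `D`, the
morphisms `∇_{r} = r'∘r`, `∇_{r'} = r∘r'`, `∇_{s} = s'∘s`, `∇_{s'} = s∘s'`
are idempotent. -/
theorem weakOperator_nablas_idempotent {D : C} (H : WBHA D) (M : C)
    (w : WeakOperator H M) :
    (w.r ≫ w.r') ≫ (w.r ≫ w.r') = w.r ≫ w.r' ∧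
    (w.r' ≫ w.r) ≫ (w.r' ≫ w.r) = w.r' ≫ w.r ∧
    (w.s ≫ w.s') ≫ (w.s ≫ w.s') = w.s ≫ w.s' ∧
    (w.s' ≫ w.s) ≫ (w.s' ≫ w.s) = w.s' ≫ w.s := by
  have kr := weakOperator_r_regular H M w
  have ks := weakOperator_s_regular H M w
  refine ⟨?_, ?_, ?_, ?_⟩
  · have := congrArg (· ≫ w.r') kr
    simpa only [Category.assoc] using this
  · have := congrArg (w.r' ≫ ·) kr
    simpa only [Category.assoc] using this
  · have := congrArg (· ≫ w.s') ks
    simpa only [Category.assoc] using this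
  · have := congrArg (w.s' ≫ ·) ks
    simpa only [Category.assoc] using this
end

section
/- Let D be a weak braided Hopf algebra and (r_M, r'_M, s_M, s'_M) an (M,D)-weak operator. Then the cancellation laws hold: r_M = ∇_{r'_M} ∘ r_M = r_M ∘ ∇_{r_M}, r'_M = r'_M ∘ ∇_{r'_M} = ∇_{r_M} ∘ r'_M, s_M = ∇_{s'_M} ∘ s_M = s_M ∘ ∇_{s_M}, and s'_M = s'_M ∘ ∇_{s'_M} = ∇_{s_M} ∘ s'_M. -/
open CategoryTheory MonoidalCategory

variable {C : Type*} [Category C] [MonoidalCategory C]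

section CancellationAux

variable {C' : Type*} [Category C'] [MonoidalCategory C']

lemma unitHomL_nat {E A B : C'} (e : 𝟙_ C' ⟶ E) (g : A ⟶ B) :
    g ≫ unitHomL e B = unitHomL e A ≫ E ◁ g := by
  rw [unitHomL, unitHomL, leftUnitor_inv_naturality_assoc, whisker_exchange, Category.assoc]

lemma unitHomR_nat {E A B : C'} (e : 𝟙_ C' ⟶ E) (g : A ⟶ B) :
    g ≫ unitHomR e B = unitHomR e A ≫ g ▷ E := by
  simp [unitHomR, whisker_exchange]

lemma counitHomL_nat {E A B : C'} (e : E ⟶ 𝟙_ C') (g : A ⟶ B) :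
    counitHomL e A ≫ g = E ◁ g ≫ counitHomL e B := by
  simp only [counitHomL, whisker_exchange_assoc, Category.assoc, leftUnitor_naturality]

lemma counitHomR_nat {E A B : C'} (e : E ⟶ 𝟙_ C') (g : A ⟶ B) :
    counitHomR e A ≫ g = g ▷ E ≫ counitHomR e B := by
  simp only [counitHomR, ← whisker_exchange_assoc, Category.assoc, rightUnitor_naturality]

lemma unitHomL_wr {E X Z : C'} (e : 𝟙_ C' ⟶ E) :
    (unitHomL e X) ▷ Z = unitHomL e (X ⊗ Z) ≫ (α_ E X Z).inv := by
  simp [unitHomL]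

lemma unitHomR_wl {E X Z : C'} (e : 𝟙_ C' ⟶ E) :
    X ◁ (unitHomR e Z) = unitHomR e (X ⊗ Z) ≫ (α_ X Z E).hom := by
  simp [unitHomR]

lemma counitHomL_wr {E X Z : C'} (e : E ⟶ 𝟙_ C') :
    (counitHomL e X) ▷ Z = (α_ E X Z).hom ≫ counitHomL e (X ⊗ Z) := by
  simp [counitHomL]

lemma counitHomR_wl {E X Z : C'} (e : E ⟶ 𝟙_ C') :
    X ◁ (counitHomR e Z) = (α_ X Z E).inv ≫ counitHomR e (X ⊗ Z) := by
  simp [counitHomR]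

variable {D M : C'}

/-- Pattern A: `∇_{a'} ∘ a = a` shape (cases for `r` and `s'`). -/
lemma cancelA (η : 𝟙_ C' ⟶ D) (μ : D ⊗ D ⟶ D)
    (hu : unitHomR η D ≫ μ = 𝟙 D) (a : M ⊗ D ⟶ D ⊗ M)
    (h : M ◁ μ ≫ a = Wfst a D ≫ D ◁ a ≫ (α_ D D M).inv ≫ μ ▷ M) :
    a ≫ (D ◁ (unitHomR η M ≫ a) ≫ (α_ D D M).inv ≫ μ ▷ M) = a := by
  have key : a ≫ D ◁ (unitHomR η M) = M ◁ (unitHomR η D) ≫ Wfst a D := by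
    rw [unitHomR_wl, unitHomR_wl, Wfst, ← Category.assoc, unitHomR_nat]
    simp
  calc a ≫ (D ◁ (unitHomR η M ≫ a) ≫ (α_ D D M).inv ≫ μ ▷ M)
      = (a ≫ D ◁ (unitHomR η M)) ≫ D ◁ a ≫ (α_ D D M).inv ≫ μ ▷ M := by
        simp [MonoidalCategory.whiskerLeft_comp]
    _ = M ◁ (unitHomR η D) ≫ (Wfst a D ≫ D ◁ a ≫ (α_ D D M).inv ≫ μ ▷ M) := by
        rw [key]; simp
    _ = M ◁ (unitHomR η D) ≫ M ◁ μ ≫ a := by rw [← h]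
    _ = M ◁ (unitHomR η D ≫ μ) ≫ a := by simp
    _ = a := by rw [hu]; simp

/-- Pattern B: `a ∘ ∇_{a} = a` shape (cases for `r` and `s'`). -/
lemma cancelB (ε : D ⟶ 𝟙_ C') (δ : D ⟶ D ⊗ D)
    (hc : δ ≫ counitHomL ε D = 𝟙 D) (a : M ⊗ D ⟶ D ⊗ M)
    (h : M ◁ δ ≫ Wfst a D ≫ D ◁ a = a ≫ δ ▷ M ≫ (α_ D D M).hom) :
    (M ◁ δ ≫ (α_ M D D).inv ≫ (a ≫ counitHomL ε M) ▷ D) ≫ a = a := by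
  have key : (counitHomL ε M) ▷ D ≫ a = (α_ D M D).hom ≫ D ◁ a ≫ counitHomL ε (D ⊗ M) := by
    rw [counitHomL_wr, Category.assoc, counitHomL_nat]
  calc (M ◁ δ ≫ (α_ M D D).inv ≫ (a ≫ counitHomL ε M) ▷ D) ≫ a
      = M ◁ δ ≫ (α_ M D D).inv ≫ a ▷ D ≫ ((counitHomL ε M) ▷ D ≫ a) := by
        simp [comp_whiskerRight]
    _ = (M ◁ δ ≫ Wfst a D ≫ D ◁ a) ≫ counitHomL ε (D ⊗ M) := by
        rw [key]; simp [Wfst]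
    _ = a ≫ δ ▷ M ≫ (α_ D D M).hom ≫ counitHomL ε (D ⊗ M) := by rw [h]; simp
    _ = a ≫ (δ ≫ counitHomL ε D) ▷ M := by
        rw [comp_whiskerRight, counitHomL_wr]
    _ = a := by rw [hc]; simp

/-- Pattern C: `b ∘ ∇_{b} = b` shape (cases for `r'` and `s`). -/
lemma cancelC (ε : D ⟶ 𝟙_ C') (δ : D ⟶ D ⊗ D)
    (hc : δ ≫ counitHomR ε D = 𝟙 D) (b : D ⊗ M ⟶ M ⊗ D)
    (h : (δ ▷ M ≫ (α_ D D M).hom) ≫ D ◁ b ≫ Wfst b D = b ≫ M ◁ δ) :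
    (δ ▷ M ≫ (α_ D D M).hom ≫ D ◁ (b ≫ counitHomR ε M)) ≫ b = b := by
  have key : D ◁ (counitHomR ε M) ≫ b = Wfst b D ≫ M ◁ (counitHomR ε D) := by
    rw [counitHomR_wl, Category.assoc, counitHomR_nat, counitHomR_wl, Wfst]
    simp
  calc (δ ▷ M ≫ (α_ D D M).hom ≫ D ◁ (b ≫ counitHomR ε M)) ≫ b
      = (δ ▷ M ≫ (α_ D D M).hom) ≫ D ◁ b ≫ (D ◁ (counitHomR ε M) ≫ b) := by
        simp [MonoidalCategory.whiskerLeft_comp]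
    _ = ((δ ▷ M ≫ (α_ D D M).hom) ≫ D ◁ b ≫ Wfst b D) ≫ M ◁ (counitHomR ε D) := by
        rw [key]; simp
    _ = b ≫ M ◁ (δ ≫ counitHomR ε D) := by rw [h]; simp
    _ = b := by rw [hc]; simp

/-- Pattern D: `∇_{b'} ∘ b = b` shape (cases for `r'` and `s`). -/
lemma cancelD (η : 𝟙_ C' ⟶ D) (μ : D ⊗ D ⟶ D)
    (hu : unitHomL η D ≫ μ = 𝟙 D) (b : D ⊗ M ⟶ M ⊗ D)
    (h : ((α_ D D M).inv ≫ μ ▷ M) ≫ b = D ◁ b ≫ Wfst b D ≫ M ◁ μ) :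
    b ≫ ((unitHomL η M ≫ b) ▷ D ≫ (α_ M D D).hom ≫ M ◁ μ) = b := by
  have key : b ≫ (unitHomL η M) ▷ D = unitHomL η (D ⊗ M) ≫ D ◁ b ≫ (α_ D M D).inv := by
    rw [unitHomL_wr, ← Category.assoc, unitHomL_nat]
    simp
  calc b ≫ ((unitHomL η M ≫ b) ▷ D ≫ (α_ M D D).hom ≫ M ◁ μ)
      = (b ≫ (unitHomL η M) ▷ D) ≫ b ▷ D ≫ (α_ M D D).hom ≫ M ◁ μ := by
        simp [comp_whiskerRight]
    _ = unitHomL η (D ⊗ M) ≫ (D ◁ b ≫ Wfst b D ≫ M ◁ μ) := by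
        rw [key]; simp [Wfst]
    _ = unitHomL η (D ⊗ M) ≫ ((α_ D D M).inv ≫ μ ▷ M) ≫ b := by rw [← h]
    _ = (unitHomL η D ≫ μ) ▷ M ≫ b := by
        rw [comp_whiskerRight, unitHomL_wr]; simp
    _ = b := by rw [hu]; simp

end CancellationAux

/-- Cancellation laws for an `(M,D)`-weak operator:
`r = ∇_{r'}∘r = r∘∇_{r}`, `r' = r'∘∇_{r'} = ∇_{r}∘r'`,
`s = ∇_{s'}∘s = s∘∇_{s}`, `s' = s'∘∇_{s'} = ∇_{s}∘s'`. -/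
theorem weakOperator_cancellation {D : C} (H : WBHA D) (M : C)
    (w : WeakOperator H M) :
    (w.r ≫ (w.r' ≫ w.r) = w.r ∧ (w.r ≫ w.r') ≫ w.r = w.r) ∧
    ((w.r' ≫ w.r) ≫ w.r' = w.r' ∧ w.r' ≫ (w.r ≫ w.r') = w.r') ∧
    (w.s ≫ (w.s' ≫ w.s) = w.s ∧ (w.s ≫ w.s') ≫ w.s = w.s) ∧
    ((w.s' ≫ w.s) ≫ w.s' = w.s' ∧ w.s' ≫ (w.s ≫ w.s') = w.s') := by
  refine ⟨⟨?_, ?_⟩, ⟨?_, ?_⟩, ⟨?_, ?_⟩, ⟨?_, ?_⟩⟩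
  · rw [w.c32b]; exact cancelA H.η H.μ H.unit_r w.r w.c41
  · rw [w.c31a]; exact cancelB H.ε H.δ H.counit_l w.r w.c43
  · rw [w.c32a]; exact cancelC H.ε H.δ H.counit_r w.r' w.c44
  · rw [w.c31b]; exact cancelD H.η H.μ H.unit_l w.r' w.c42
  · rw [w.c34b]; exact cancelD H.η H.μ H.unit_l w.s w.c45
  · rw [w.c33a]; exact cancelC H.ε H.δ H.counit_r w.s w.c47
  · rw [w.c34a]; exact cancelB H.ε H.δ H.counit_l w.s' w.c48
  · rw [w.c33b]; exact cancelA H.η H.μ H.unit_r w.s' w.c46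
end

section
/- Let D be a weak braided Hopf algebra and (r_M, r'_M, s_M, s'_M) an (M,D)-weak operator. Then (r_M⊗D)∘(M⊗(δ_D∘η_D)) = (D⊗r'_M)∘((δ_D∘η_D)⊗M), and dually ((ε_D∘μ_D)⊗M)∘(D⊗r_M) = (M⊗(ε_D∘μ_D))∘(r'_M⊗D). -/
open CategoryTheory MonoidalCategory

variable {C : Type*} [Category C] [MonoidalCategory C]

section Helpers

private lemma wo_Wfst_comp {X Y X' Y' X'' Y'' : C} (f : X ⊗ Y ⟶ X' ⊗ Y')
    (g : X' ⊗ Y' ⟶ X'' ⊗ Y'') (Z : C) :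
    Wfst (f ≫ g) Z = Wfst f Z ≫ Wfst g Z := by
  simp [Wfst]

private lemma wo_Wfst_nat {X Y X' Y' Z Z' : C} (f : X ⊗ Y ⟶ X' ⊗ Y') (g : Z ⟶ Z') :
    Wfst f Z ≫ X' ◁ (Y' ◁ g) = X ◁ (Y ◁ g) ≫ Wfst f Z' := by
  simp only [Wfst, Category.assoc]
  rw [← associator_naturality_right, ← whisker_exchange_assoc,
    ← associator_inv_naturality_right_assoc]

private lemma wo_Wfst_whiskerRight {X X' : C} (q : X ⟶ X') (Y Z : C) :
    Wfst (q ▷ Y) Z = q ▷ (Y ⊗ Z) := by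
  simp only [Wfst]
  monoidal

end Helpers
section WOFacts

variable {D M : C} {H : WBHA D} (w : WeakOperator H M)

/-- `(δ ⊗ M) ≫ (D ⊗ (ε ⊗ M))` collapses by the counit law (structural form). -/
private lemma wo_U5 :
    H.δ ▷ M ≫ (α_ D D M).hom ≫ D ◁ counitHomL H.ε M
      = (H.δ ≫ counitHomR H.ε D) ▷ M := by
  simp only [counitHomL, counitHomR, MonoidalCategory.whiskerLeft_comp, comp_whiskerRight, Category.assoc]
  monoidal

private lemma wo_key1 :
    M ◁ H.δ ≫ Wfst w.r D ≫ D ◁ (w.r ≫ counitHomL H.ε M) = w.r := by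
  simp only [MonoidalCategory.whiskerLeft_comp]
  rw [reassoc_of% w.c43, wo_U5 (M := M) (H := H), H.counit_r, id_whiskerRight, Category.comp_id]

private lemma wo_factC :
    M ◁ H.δ ≫ Wfst w.r D ≫ D ◁ (w.r ≫ w.r') = M ◁ H.δ ≫ Wfst w.r D := by
  calc M ◁ H.δ ≫ Wfst w.r D ≫ D ◁ (w.r ≫ w.r')
      = M ◁ H.δ ≫ (Wfst w.r D ≫ D ◁ (M ◁ H.δ)) ≫
          D ◁ (α_ M D D).inv ≫ D ◁ ((w.r ≫ counitHomL H.ε M) ▷ D) := by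
        rw [w.c31a]; simp only [MonoidalCategory.whiskerLeft_comp, Category.assoc]
    _ = (M ◁ H.δ ≫ M ◁ (D ◁ H.δ)) ≫ Wfst w.r (D ⊗ D) ≫
          D ◁ (α_ M D D).inv ≫ D ◁ ((w.r ≫ counitHomL H.ε M) ▷ D) := by
        rw [wo_Wfst_nat]; simp only [Category.assoc]
    _ = (M ◁ H.δ ≫ M ◁ (H.δ ▷ D) ≫ M ◁ (α_ D D D).hom) ≫ Wfst w.r (D ⊗ D) ≫
          D ◁ (α_ M D D).inv ≫ D ◁ ((w.r ≫ counitHomL H.ε M) ▷ D) := by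
        simp only [← MonoidalCategory.whiskerLeft_comp]
        rw [H.coassoc]
    _ = M ◁ H.δ ≫ (α_ M D D).inv ≫
          (M ◁ H.δ ≫ Wfst w.r D ≫ D ◁ (w.r ≫ counitHomL H.ε M)) ▷ D ≫
          (α_ D M D).hom := by
        simp only [Wfst, counitHomL, MonoidalCategory.whiskerLeft_comp, comp_whiskerRight, Category.assoc]
        monoidal
    _ = M ◁ H.δ ≫ Wfst w.r D := by
        rw [wo_key1]; simp only [Wfst]

end WOFacts
section WOFacts2

variable {D M : C} {H : WBHA D} (w : WeakOperator H M)

private lemma wo_c44' :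
    H.δ ▷ M ≫ (α_ D D M).hom ≫ D ◁ w.r' ≫ Wfst w.r' D = w.r' ≫ M ◁ H.δ := by
  simpa only [Category.assoc] using w.c44

private lemma wo_c42' :
    (α_ D D M).inv ≫ H.μ ▷ M ≫ w.r' = D ◁ w.r' ≫ Wfst w.r' D ≫ M ◁ H.μ := by
  simpa only [Category.assoc] using w.c42

private lemma wo_key2 :
    H.δ ▷ M ≫ (α_ D D M).hom ≫ D ◁ w.r' ≫ Wfst w.r' D ≫ M ◁ (counitHomL H.ε D)
      = w.r' := by
  rw [reassoc_of% (wo_c44' w), ← MonoidalCategory.whiskerLeft_comp, H.counit_l,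
    MonoidalCategory.whiskerLeft_id, Category.comp_id]

private lemma wo_factC2 :
    H.δ ▷ M ≫ (α_ D D M).hom ≫ D ◁ w.r' ≫ Wfst (w.r' ≫ w.r) D
      = H.δ ▷ M ≫ (α_ D D M).hom ≫ D ◁ w.r' := by
  calc H.δ ▷ M ≫ (α_ D D M).hom ≫ D ◁ w.r' ≫ Wfst (w.r' ≫ w.r) D
      = H.δ ▷ M ≫ (α_ D D M).hom ≫ D ◁ w.r' ≫ Wfst (H.δ ▷ M) D ≫
          Wfst ((α_ D D M).hom) D ≫ Wfst (D ◁ (w.r' ≫ counitHomR H.ε M)) D := by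
        rw [w.c32a,
          wo_Wfst_comp (H.δ ▷ M) ((α_ D D M).hom ≫ D ◁ (w.r' ≫ counitHomR H.ε M)) D,
          wo_Wfst_comp ((α_ D D M).hom) (D ◁ (w.r' ≫ counitHomR H.ε M)) D]
    _ = H.δ ▷ M ≫ (α_ D D M).hom ≫ D ◁ w.r' ≫ H.δ ▷ (M ⊗ D) ≫
          Wfst ((α_ D D M).hom) D ≫ Wfst (D ◁ (w.r' ≫ counitHomR H.ε M)) D := by
        rw [wo_Wfst_whiskerRight]
    _ = H.δ ▷ M ≫ (α_ D D M).hom ≫ H.δ ▷ (D ⊗ M) ≫ (D ⊗ D) ◁ w.r' ≫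
          Wfst ((α_ D D M).hom) D ≫ Wfst (D ◁ (w.r' ≫ counitHomR H.ε M)) D := by
        rw [whisker_exchange_assoc]
    _ = (H.δ ≫ H.δ ▷ D) ▷ M ≫ (α_ (D ⊗ D) D M).hom ≫ (D ⊗ D) ◁ w.r' ≫
          Wfst ((α_ D D M).hom) D ≫ Wfst (D ◁ (w.r' ≫ counitHomR H.ε M)) D := by
        simp only [comp_whiskerRight, Category.assoc]
        monoidal
    _ = (H.δ ≫ D ◁ H.δ ≫ (α_ D D D).inv) ▷ M ≫ (α_ (D ⊗ D) D M).hom ≫ (D ⊗ D) ◁ w.r' ≫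
          Wfst ((α_ D D M).hom) D ≫ Wfst (D ◁ (w.r' ≫ counitHomR H.ε M)) D := by
        rw [show H.δ ≫ H.δ ▷ D = H.δ ≫ D ◁ H.δ ≫ (α_ D D D).inv from by
          rw [reassoc_of% H.coassoc]; simp]
    _ = H.δ ▷ M ≫ (α_ D D M).hom ≫ D ◁ (H.δ ▷ M ≫ (α_ D D M).hom ≫ D ◁ w.r' ≫
          Wfst w.r' D ≫ M ◁ (counitHomL H.ε D)) := by
        simp only [Wfst, counitHomL, counitHomR, MonoidalCategory.whiskerLeft_comp,
          comp_whiskerRight, Category.assoc]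
        monoidal
    _ = H.δ ▷ M ≫ (α_ D D M).hom ≫ D ◁ w.r' := by rw [wo_key2]

private lemma wo_key3 :
    D ◁ (unitHomL H.η M ≫ w.r') ≫ Wfst w.r' D ≫ M ◁ H.μ = w.r' := by
  simp only [MonoidalCategory.whiskerLeft_comp, Category.assoc]
  rw [← w.c42]
  have U7 : D ◁ unitHomL H.η M ≫ (α_ D D M).inv ≫ H.μ ▷ M
      = (unitHomR H.η D ≫ H.μ) ▷ M := by
    simp only [unitHomL, unitHomR, MonoidalCategory.whiskerLeft_comp,
      comp_whiskerRight, Category.assoc]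
    monoidal
  rw [← Category.assoc, ← Category.assoc, Category.assoc _ _ (H.μ ▷ M)]
  rw [show D ◁ unitHomL H.η M ≫ (α_ D D M).inv ≫ H.μ ▷ M = 𝟙 (D ⊗ M) from by
    rw [U7, H.unit_r, id_whiskerRight]]
  rw [Category.id_comp]

private lemma wo_factCmu :
    D ◁ (w.r ≫ w.r') ≫ Wfst w.r' D ≫ M ◁ H.μ = Wfst w.r' D ≫ M ◁ H.μ := by
  calc D ◁ (w.r ≫ w.r') ≫ Wfst w.r' D ≫ M ◁ H.μ
      = D ◁ ((unitHomL H.η M ≫ w.r') ▷ D) ≫ D ◁ (α_ M D D).hom ≫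
          (D ◁ (M ◁ H.μ) ≫ Wfst w.r' D) ≫ M ◁ H.μ := by
        rw [w.c31b]
        simp only [MonoidalCategory.whiskerLeft_comp, Category.assoc]
    _ = D ◁ ((unitHomL H.η M ≫ w.r') ▷ D) ≫ D ◁ (α_ M D D).hom ≫
          Wfst w.r' (D ⊗ D) ≫ M ◁ (D ◁ H.μ ≫ H.μ) := by
        rw [← wo_Wfst_nat w.r' H.μ]
        simp only [MonoidalCategory.whiskerLeft_comp, Category.assoc]
    _ = D ◁ ((unitHomL H.η M ≫ w.r') ▷ D) ≫ D ◁ (α_ M D D).hom ≫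
          Wfst w.r' (D ⊗ D) ≫ M ◁ ((α_ D D D).inv ≫ H.μ ▷ D ≫ H.μ) := by
        rw [H.mul_assoc]
    _ = (α_ D M D).inv ≫
          (D ◁ (unitHomL H.η M ≫ w.r') ≫ Wfst w.r' D ≫ M ◁ H.μ) ▷ D ≫
          (α_ M D D).hom ≫ M ◁ H.μ := by
        simp only [Wfst, unitHomL, MonoidalCategory.whiskerLeft_comp,
          comp_whiskerRight, Category.assoc]
        monoidal
    _ = (α_ D M D).inv ≫ w.r' ▷ D ≫ (α_ M D D).hom ≫ M ◁ H.μ := by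
        rw [wo_key3]
    _ = Wfst w.r' D ≫ M ◁ H.μ := by simp only [Wfst, Category.assoc]

private lemma wo_key4 :
    M ◁ unitHomL H.η D ≫ Wfst w.r D ≫ D ◁ w.r ≫ (α_ D D M).inv ≫ H.μ ▷ M = w.r := by
  rw [← w.c41, ← MonoidalCategory.whiskerLeft_comp_assoc, H.unit_l,
    MonoidalCategory.whiskerLeft_id, Category.id_comp]

private lemma wo_factC3 :
    Wfst (w.r' ≫ w.r) D ≫ D ◁ w.r ≫ (α_ D D M).inv ≫ H.μ ▷ M
      = D ◁ w.r ≫ (α_ D D M).inv ≫ H.μ ▷ M := by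
  calc Wfst (w.r' ≫ w.r) D ≫ D ◁ w.r ≫ (α_ D D M).inv ≫ H.μ ▷ M
      = Wfst (D ◁ (unitHomR H.η M ≫ w.r)) D ≫ Wfst ((α_ D D M).inv) D ≫
          Wfst (H.μ ▷ M) D ≫ D ◁ w.r ≫ (α_ D D M).inv ≫ H.μ ▷ M := by
        rw [w.c32b,
          wo_Wfst_comp (D ◁ (unitHomR H.η M ≫ w.r)) ((α_ D D M).inv ≫ H.μ ▷ M) D,
          wo_Wfst_comp ((α_ D D M).inv) (H.μ ▷ M) D]
        simp only [Category.assoc]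
    _ = Wfst (D ◁ (unitHomR H.η M ≫ w.r)) D ≫ Wfst ((α_ D D M).inv) D ≫
          H.μ ▷ (M ⊗ D) ≫ D ◁ w.r ≫ (α_ D D M).inv ≫ H.μ ▷ M := by
        rw [wo_Wfst_whiskerRight]
    _ = Wfst (D ◁ (unitHomR H.η M ≫ w.r)) D ≫ Wfst ((α_ D D M).inv) D ≫
          (D ⊗ D) ◁ w.r ≫ H.μ ▷ (D ⊗ M) ≫ (α_ D D M).inv ≫ H.μ ▷ M := by
        rw [← whisker_exchange_assoc]
    _ = Wfst (D ◁ (unitHomR H.η M ≫ w.r)) D ≫ Wfst ((α_ D D M).inv) D ≫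
          (D ⊗ D) ◁ w.r ≫ (α_ (D ⊗ D) D M).inv ≫
          ((α_ D D D).hom ≫ D ◁ H.μ ≫ H.μ) ▷ M := by
        rw [show H.μ ▷ (D ⊗ M) ≫ (α_ D D M).inv ≫ H.μ ▷ M
            = (α_ (D ⊗ D) D M).inv ≫ ((α_ D D D).hom ≫ D ◁ H.μ ≫ H.μ) ▷ M from by
          rw [H.mul_assoc]
          simp only [comp_whiskerRight, Category.assoc]
          monoidal]
    _ = D ◁ (M ◁ unitHomL H.η D ≫ Wfst w.r D ≫ D ◁ w.r ≫ (α_ D D M).inv ≫ H.μ ▷ M) ≫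
          (α_ D D M).inv ≫ H.μ ▷ M := by
        simp only [Wfst, unitHomL, unitHomR, MonoidalCategory.whiskerLeft_comp,
          comp_whiskerRight, Category.assoc]
        monoidal
    _ = D ◁ w.r ≫ (α_ D D M).inv ≫ H.μ ▷ M := by rw [wo_key4]

end WOFacts2
section WOFacts3

variable {D M : C} {H : WBHA D} (w : WeakOperator H M)

private lemma wo_factA :
    unitHomR H.η M ≫ (w.r ≫ w.r') = unitHomL H.η M ≫ w.r' := by
  rw [w.c31b]
  have step : unitHomR H.η M ≫ (unitHomL H.η M ≫ w.r') ▷ D ≫ (α_ M D D).hom ≫ M ◁ H.μ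
      = (unitHomL H.η M ≫ w.r') ≫ M ◁ (unitHomR H.η D ≫ H.μ) := by
    simp only [unitHomR, Category.assoc]
    rw [whisker_exchange_assoc]
    simp only [MonoidalCategory.whiskerLeft_comp, Category.assoc]
    monoidal
  rw [step, H.unit_r, MonoidalCategory.whiskerLeft_id, Category.comp_id]

private lemma wo_factAeps :
    (w.r ≫ w.r') ≫ counitHomR H.ε M = w.r ≫ counitHomL H.ε M := by
  rw [w.c31a]
  have step : (M ◁ H.δ ≫ (α_ M D D).inv ≫ (w.r ≫ counitHomL H.ε M) ▷ D) ≫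
        counitHomR H.ε M
      = M ◁ (H.δ ≫ counitHomR H.ε D) ≫ (w.r ≫ counitHomL H.ε M) := by
    simp only [counitHomR, MonoidalCategory.whiskerLeft_comp, Category.assoc]
    rw [← whisker_exchange_assoc]
    monoidal
  rw [step, H.counit_r, MonoidalCategory.whiskerLeft_id, Category.id_comp]

private lemma wo_factA'eps :
    (w.r' ≫ w.r) ≫ counitHomL H.ε M = w.r' ≫ counitHomR H.ε M := by
  rw [w.c32a]
  have step : (H.δ ▷ M ≫ (α_ D D M).hom ≫ D ◁ (w.r' ≫ counitHomR H.ε M)) ≫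
        counitHomL H.ε M
      = (H.δ ≫ counitHomL H.ε D) ▷ M ≫ (w.r' ≫ counitHomR H.ε M) := by
    simp only [counitHomL, comp_whiskerRight, Category.assoc]
    rw [whisker_exchange_assoc]
    monoidal
  rw [step, H.counit_l, id_whiskerRight, Category.id_comp]

private lemma wo_U3 :
    M ◁ H.δ ≫ Wfst w.r D ≫ D ◁ counitHomR H.ε M = w.r := by
  simp only [counitHomR, MonoidalCategory.whiskerLeft_comp]
  rw [reassoc_of% (wo_Wfst_nat w.r H.ε)]
  rw [show Wfst w.r (𝟙_ C) ≫ D ◁ (ρ_ M).hom = M ◁ (ρ_ D).hom ≫ w.r from by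
    simp only [Wfst]; monoidal]
  rw [← MonoidalCategory.whiskerLeft_comp_assoc, ← MonoidalCategory.whiskerLeft_comp_assoc]
  simp only [Category.assoc]
  rw [show H.δ ≫ D ◁ H.ε ≫ (ρ_ D).hom = 𝟙 D from by
    have := H.counit_r; simpa [counitHomR] using this]
  simp

private lemma wo_cancel1 : w.r ≫ w.r' ≫ w.r = w.r := by
  rw [w.c32a]
  rw [← reassoc_of% w.c43]
  calc M ◁ H.δ ≫ Wfst w.r D ≫ D ◁ w.r ≫ D ◁ (w.r' ≫ counitHomR H.ε M)
      = M ◁ H.δ ≫ Wfst w.r D ≫ D ◁ (w.r ≫ w.r') ≫ D ◁ counitHomR H.ε M := by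
        simp only [MonoidalCategory.whiskerLeft_comp, Category.assoc]
    _ = M ◁ H.δ ≫ Wfst w.r D ≫ D ◁ counitHomR H.ε M := by
        rw [reassoc_of% (wo_factC w)]
    _ = w.r := wo_U3 w

private lemma wo_U4 :
    M ◁ H.δ ≫ (α_ M D D).inv ≫ counitHomR H.ε M ▷ D = M ◁ (H.δ ≫ counitHomL H.ε D) := by
  simp only [counitHomR, counitHomL, comp_whiskerRight,
    MonoidalCategory.whiskerLeft_comp, Category.assoc]
  monoidal

private lemma wo_cancel2 : w.r' ≫ w.r ≫ w.r' = w.r' := by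
  conv_lhs => rw [w.c31a]
  rw [← reassoc_of% (wo_c44' w)]
  rw [reassoc_of% (show Wfst w.r' D ≫ (α_ M D D).inv = (α_ D M D).inv ≫ w.r' ▷ D from by
    simp [Wfst])]
  simp only [← comp_whiskerRight, Category.assoc]
  rw [show w.r' ≫ w.r ≫ counitHomL H.ε M = w.r' ≫ counitHomR H.ε M from by
    rw [← Category.assoc, wo_factA'eps]]
  rw [comp_whiskerRight]
  rw [show (α_ D M D).inv ≫ w.r' ▷ D ≫ counitHomR H.ε M ▷ D
      = Wfst w.r' D ≫ (α_ M D D).inv ≫ counitHomR H.ε M ▷ D from by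
    simp [Wfst]]
  rw [reassoc_of% (wo_c44' w), wo_U4 (M := M) (H := H), H.counit_l,
    MonoidalCategory.whiskerLeft_id, Category.comp_id]

private lemma wo_factB :
    (w.r ≫ w.r') ≫ M ◁ H.δ = M ◁ H.δ ≫ Wfst (w.r ≫ w.r') D := by
  calc (w.r ≫ w.r') ≫ M ◁ H.δ
      = w.r ≫ H.δ ▷ M ≫ (α_ D D M).hom ≫ D ◁ w.r' ≫ Wfst w.r' D := by
        rw [Category.assoc, ← wo_c44' w]
    _ = M ◁ H.δ ≫ Wfst w.r D ≫ D ◁ w.r ≫ D ◁ w.r' ≫ Wfst w.r' D := by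
        rw [← reassoc_of% w.c43]
    _ = M ◁ H.δ ≫ Wfst w.r D ≫ D ◁ (w.r ≫ w.r') ≫ Wfst w.r' D := by
        simp only [MonoidalCategory.whiskerLeft_comp, Category.assoc]
    _ = M ◁ H.δ ≫ Wfst w.r D ≫ Wfst w.r' D := by
        rw [reassoc_of% (wo_factC w)]
    _ = M ◁ H.δ ≫ Wfst (w.r ≫ w.r') D := by rw [wo_Wfst_comp]

private lemma wo_factB' :
    Wfst (w.r ≫ w.r') D ≫ M ◁ H.μ = M ◁ H.μ ≫ (w.r ≫ w.r') := by
  symm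
  calc M ◁ H.μ ≫ (w.r ≫ w.r')
      = (M ◁ H.μ ≫ w.r) ≫ w.r' := by rw [Category.assoc]
    _ = Wfst w.r D ≫ D ◁ w.r ≫ (α_ D D M).inv ≫ H.μ ▷ M ≫ w.r' := by
        rw [w.c41]; simp only [Category.assoc]
    _ = Wfst w.r D ≫ D ◁ w.r ≫ D ◁ w.r' ≫ Wfst w.r' D ≫ M ◁ H.μ := by
        rw [wo_c42' w]
    _ = Wfst w.r D ≫ D ◁ (w.r ≫ w.r') ≫ Wfst w.r' D ≫ M ◁ H.μ := by
        simp only [MonoidalCategory.whiskerLeft_comp, Category.assoc]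
    _ = Wfst w.r D ≫ Wfst w.r' D ≫ M ◁ H.μ := by
        rw [wo_factCmu]
    _ = Wfst (w.r ≫ w.r') D ≫ M ◁ H.μ := by
        rw [← reassoc_of% (wo_Wfst_comp w.r w.r' D)]

end WOFacts3
/-- Equations (78) and (79): `(r⊗D)∘(M⊗(δ∘η)) = (D⊗r')∘((δ∘η)⊗M)` and
`((ε∘μ)⊗M)∘(D⊗r) = (M⊗(ε∘μ))∘(r'⊗D)` for an `(M,D)`-weak operator. -/
theorem weakOperator_unit_counit_exchange {D : C} (H : WBHA D) (M : C)
    (w : WeakOperator H M) :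
    ((ρ_ M).inv ≫ M ◁ (H.η ≫ H.δ)) ≫ Wfst w.r D =
      ((λ_ M).inv ≫ (H.η ≫ H.δ) ▷ M ≫ (α_ D D M).hom) ≫ D ◁ w.r' ∧
    D ◁ w.r ≫ (α_ D D M).inv ≫ (H.μ ≫ H.ε) ▷ M ≫ (λ_ M).hom =
      Wfst w.r' D ≫ M ◁ (H.μ ≫ H.ε) ≫ (ρ_ M).hom := by
  have hc1 : Wfst (w.r ≫ w.r') D ≫ Wfst w.r D = Wfst w.r D := by
    rw [← wo_Wfst_comp, Category.assoc, wo_cancel1]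
  have hc2 : Wfst w.r' D ≫ Wfst (w.r ≫ w.r') D = Wfst w.r' D := by
    rw [← wo_Wfst_comp, wo_cancel2]
  constructor
  · calc ((ρ_ M).inv ≫ M ◁ (H.η ≫ H.δ)) ≫ Wfst w.r D
        = unitHomR H.η M ≫ M ◁ H.δ ≫ Wfst w.r D := by
          simp only [unitHomR, MonoidalCategory.whiskerLeft_comp, Category.assoc]
      _ = unitHomR H.η M ≫ M ◁ H.δ ≫ Wfst (w.r ≫ w.r') D ≫ Wfst w.r D := by
          rw [hc1]
      _ = unitHomR H.η M ≫ w.r ≫ w.r' ≫ M ◁ H.δ ≫ Wfst w.r D := by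
          rw [← reassoc_of% (wo_factB w)]
      _ = unitHomL H.η M ≫ w.r' ≫ M ◁ H.δ ≫ Wfst w.r D := by
          rw [reassoc_of% (wo_factA w)]
      _ = unitHomL H.η M ≫ H.δ ▷ M ≫ (α_ D D M).hom ≫ D ◁ w.r' ≫
            Wfst w.r' D ≫ Wfst w.r D := by
          rw [← reassoc_of% (wo_c44' w)]
      _ = unitHomL H.η M ≫ H.δ ▷ M ≫ (α_ D D M).hom ≫ D ◁ w.r' ≫
            Wfst (w.r' ≫ w.r) D := by
          rw [wo_Wfst_comp]
      _ = unitHomL H.η M ≫ H.δ ▷ M ≫ (α_ D D M).hom ≫ D ◁ w.r' := by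
          rw [wo_factC2]
      _ = ((λ_ M).inv ≫ (H.η ≫ H.δ) ▷ M ≫ (α_ D D M).hom) ≫ D ◁ w.r' := by
          simp only [unitHomL, comp_whiskerRight, Category.assoc]
  · symm
    calc Wfst w.r' D ≫ M ◁ (H.μ ≫ H.ε) ≫ (ρ_ M).hom
        = Wfst w.r' D ≫ M ◁ H.μ ≫ counitHomR H.ε M := by
          simp only [counitHomR, MonoidalCategory.whiskerLeft_comp, Category.assoc]
      _ = Wfst w.r' D ≫ Wfst (w.r ≫ w.r') D ≫ M ◁ H.μ ≫ counitHomR H.ε M := by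
          rw [← reassoc_of% hc2]
      _ = Wfst w.r' D ≫ M ◁ H.μ ≫ w.r ≫ w.r' ≫ counitHomR H.ε M := by
          rw [reassoc_of% (wo_factB' w)]
      _ = Wfst w.r' D ≫ M ◁ H.μ ≫ w.r ≫ counitHomL H.ε M := by
          rw [show w.r ≫ w.r' ≫ counitHomR H.ε M = w.r ≫ counitHomL H.ε M from by
            rw [← Category.assoc, wo_factAeps]]
      _ = Wfst w.r' D ≫ Wfst w.r D ≫ D ◁ w.r ≫ (α_ D D M).inv ≫ H.μ ▷ M ≫
            counitHomL H.ε M := by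
          rw [reassoc_of% w.c41]
      _ = Wfst (w.r' ≫ w.r) D ≫ D ◁ w.r ≫ (α_ D D M).inv ≫ H.μ ▷ M ≫
            counitHomL H.ε M := by
          rw [← reassoc_of% (wo_Wfst_comp w.r' w.r D)]
      _ = D ◁ w.r ≫ (α_ D D M).inv ≫ H.μ ▷ M ≫ counitHomL H.ε M := by
          rw [reassoc_of% (wo_factC3 w)]
      _ = D ◁ w.r ≫ (α_ D D M).inv ≫ (H.μ ≫ H.ε) ▷ M ≫ (λ_ M).hom := by
          simp only [counitHomL, comp_whiskerRight, Category.assoc]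
end

section
/- Let D be a weak braided Hopf algebra and let (M,φ_M) be a left D-module with an (M,D)-weak operator (r_M, r'_M, s_M, s'_M). Then φ_M = φ_M ∘ ∇_{s_M} if and only if φ_M ∘ s'_M ∘ (M⊗η_D) = id_M. -/
open CategoryTheory MonoidalCategory

variable {C : Type*} [Category C] [MonoidalCategory C]

/-- For a left `D`-module `(M,φ)` with an `(M,D)`-weak operator:
`φ = φ∘∇_{s}` iff `φ∘s'∘(M⊗η) = id_M`. -/
theorem module_nabla_s_iff {D : C} (H : WBHA D) (M : C) (w : WeakOperator H M)
    (φ : D ⊗ M ⟶ M)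
    (hunit : unitHomL H.η M ≫ φ = 𝟙 M)
    (hassoc : D ◁ φ ≫ φ = (α_ D D M).inv ≫ H.μ ▷ M ≫ φ) :
    (w.s ≫ w.s') ≫ φ = φ ↔ unitHomR H.η M ≫ w.s' ≫ φ = 𝟙 M := by
  have key : (w.s ≫ w.s') ≫ φ = D ◁ (unitHomR H.η M ≫ w.s' ≫ φ) ≫ φ := by
    rw [w.c33b]
    simp only [MonoidalCategory.whiskerLeft_comp, Category.assoc, ← hassoc]
  have natL : ∀ f : M ⟶ M, unitHomL H.η M ≫ D ◁ f = f ≫ unitHomL H.η M := by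
    intro f
    simp only [unitHomL, Category.assoc, ← whisker_exchange]
    rw [← leftUnitor_inv_naturality_assoc]
  constructor
  · intro h
    have h2 : unitHomL H.η M ≫ (w.s ≫ w.s') ≫ φ = unitHomL H.η M ≫ φ := by rw [h]
    rw [key, ← Category.assoc, natL, Category.assoc, hunit, Category.comp_id] at h2
    exact h2
  · intro h
    rw [key, h]
    simp
end

section
/- Let D be a weak braided Hopf algebra and (M,φ_M) a left D-module with an (M,D)-weak operator compatible with the module structure. Then the morphism ∇_{M⊗M'} := (φ_M⊗φ_{M'})∘(D⊗s_M⊗M')∘((δ_D∘η_D)⊗M⊗M') on M⊗M' is idempotent, for any two left D-modules (M,φ_M), (M',φ_{M'}) equipped with compatible weak operators. -/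
open CategoryTheory MonoidalCategory

variable {C : Type*} [Category C] [MonoidalCategory C]

section Compat

variable {D M : C}

/-- Compatibility of `a : M⊗D ⟶ D⊗M` with a left module structure `φ`
(conditions (i-1), (i-3) of Definition 2.2). -/
def modCompatMD (t : D ⊗ D ⟶ D ⊗ D) (φ : D ⊗ M ⟶ M) (a : M ⊗ D ⟶ D ⊗ M) : Prop :=
  ((α_ D M D).inv ≫ φ ▷ D) ≫ a = D ◁ a ≫ Wfst t M ≫ D ◁ φ

/-- Compatibility of `b : D⊗M ⟶ M⊗D` with a left module structure `φ`
(conditions (i-2), (i-4) of Definition 2.2). -/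
def modCompatDM (t : D ⊗ D ⟶ D ⊗ D) (φ : D ⊗ M ⟶ M) (b : D ⊗ M ⟶ M ⊗ D) : Prop :=
  D ◁ φ ≫ b = Wfst t M ≫ D ◁ b ≫ (α_ D M D).inv ≫ φ ▷ D

/-- Compatibility of `a : M⊗D ⟶ D⊗M` with a left comodule structure `ϱ`
(conditions (ii-1), (ii-3) of Definition 2.2). -/
def comodCompatMD (t : D ⊗ D ⟶ D ⊗ D) (ϱ : M ⟶ D ⊗ M) (a : M ⊗ D ⟶ D ⊗ M) : Prop :=
  a ≫ D ◁ ϱ = (ϱ ▷ D ≫ (α_ D M D).hom) ≫ D ◁ a ≫ Wfst t M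

/-- Compatibility of `b : D⊗M ⟶ M⊗D` with a left comodule structure `ϱ`
(conditions (ii-2), (ii-4) of Definition 2.2). -/
def comodCompatDM (t : D ⊗ D ⟶ D ⊗ D) (ϱ : M ⟶ D ⊗ M) (b : D ⊗ M ⟶ M ⊗ D) : Prop :=
  b ≫ ϱ ▷ D ≫ (α_ D M D).hom = D ◁ ϱ ≫ Wfst t M ≫ D ◁ b

end Compat

variable {D : C} (H : WBHA D) (M : C) in
/-- A left-left Yetter-Drinfeld module over a weak braided Hopf algebra `D`:
a left `D`-module and left `D`-comodule equipped with an `(M,D)`-weak operator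
compatible with the (co)module structures, satisfying (yd1) and (yd2). -/
structure YetterDrinfeld where
  φ : D ⊗ M ⟶ M
  ϱ : M ⟶ D ⊗ M
  w : WeakOperator H M
  module_unit : unitHomL H.η M ≫ φ = 𝟙 M
  module_assoc : D ◁ φ ≫ φ = (α_ D D M).inv ≫ H.μ ▷ M ≫ φ
  comodule_counit : ϱ ≫ counitHomL H.ε M = 𝟙 M
  comodule_coassoc : ϱ ≫ D ◁ ϱ = ϱ ≫ H.δ ▷ M ≫ (α_ D D M).hom
  mod_r : modCompatMD H.t φ w.r
  mod_r' : modCompatDM H.t' φ w.r'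
  mod_s : modCompatDM H.t φ w.s
  mod_s' : modCompatMD H.t' φ w.s'
  comod_r : comodCompatMD H.t ϱ w.r
  comod_r' : comodCompatDM H.t' ϱ w.r'
  comod_s : comodCompatDM H.t ϱ w.s
  comod_s' : comodCompatMD H.t' ϱ w.s'
  yd1 : ϱ = unitHomL H.η M ≫ (H.δ ⊗ₘ ϱ) ≫ (α_ D D (D ⊗ M)).hom ≫
      D ◁ Wfst H.t M ≫ (α_ D D (D ⊗ M)).inv ≫ (H.μ ⊗ₘ φ)
  yd2 : (H.δ ⊗ₘ ϱ) ≫ (α_ D D (D ⊗ M)).hom ≫ D ◁ Wfst H.t M ≫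
        (α_ D D (D ⊗ M)).inv ≫ (H.μ ⊗ₘ φ) =
      (H.δ ▷ M ≫ (α_ D D M).hom) ≫ D ◁ w.s ≫ Wfst (φ ≫ ϱ) D ≫
        D ◁ w.r ≫ (α_ D D M).inv ≫ H.μ ▷ M


section AuxNabla

variable {C : Type*} [Category C] [MonoidalCategory C]

/-- Left action of `φ` on the first two factors with a trailing context `Z`. -/
def lact {D M : C} (φ : D ⊗ M ⟶ M) (Z : C) : D ⊗ (M ⊗ Z) ⟶ M ⊗ Z :=
  (α_ D M Z).inv ≫ φ ▷ Z

lemma exchWfst {X Y X' Y' A B : C} (f : X ⊗ Y ⟶ X' ⊗ Y') (g : A ⟶ B) :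
    X ◁ (Y ◁ g) ≫ Wfst f B = Wfst f A ≫ X' ◁ (Y' ◁ g) := by
  simp only [Wfst]
  rw [associator_inv_naturality_right_assoc, whisker_exchange_assoc, Category.assoc]
  monoidal

lemma exch2 {D M : C} (φ : D ⊗ M ⟶ M) {A B : C} (g : A ⟶ B) :
    D ◁ (M ◁ g) ≫ lact φ B = lact φ A ≫ M ◁ g := by
  simp only [lact]
  rw [associator_inv_naturality_right_assoc, whisker_exchange, Category.assoc]

lemma whisk_modCompatDM {D M : C} (t : D ⊗ D ⟶ D ⊗ D) (φ : D ⊗ M ⟶ M)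
    (s : D ⊗ M ⟶ M ⊗ D)
    (h : D ◁ φ ≫ s = Wfst t M ≫ D ◁ s ≫ (α_ D M D).inv ≫ φ ▷ D) (Z : C) :
    D ◁ lact φ Z ≫ Wfst s Z =
      Wfst t (M ⊗ Z) ≫ D ◁ Wfst s Z ≫ lact φ (D ⊗ Z) := by
  calc D ◁ lact φ Z ≫ Wfst s Z
      = 𝟙 (D ⊗ (D ⊗ (M ⊗ Z))) ⊗≫ (D ◁ φ ≫ s) ▷ Z ⊗≫ 𝟙 (M ⊗ (D ⊗ Z)) := by
        simp only [lact, Wfst]; monoidal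
    _ = 𝟙 (D ⊗ (D ⊗ (M ⊗ Z))) ⊗≫
          (Wfst t M ≫ D ◁ s ≫ (α_ D M D).inv ≫ φ ▷ D) ▷ Z ⊗≫ 𝟙 (M ⊗ (D ⊗ Z)) := by
        rw [h]
    _ = Wfst t (M ⊗ Z) ≫ D ◁ Wfst s Z ≫ lact φ (D ⊗ Z) := by
        simp only [lact, Wfst]; monoidal

lemma whisk_assoc {D M : C} (μ : D ⊗ D ⟶ D) (φ : D ⊗ M ⟶ M)
    (h : D ◁ φ ≫ φ = (α_ D D M).inv ≫ μ ▷ M ≫ φ) (Z : C) :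
    D ◁ lact φ Z ≫ lact φ Z = lact μ (M ⊗ Z) ≫ lact φ Z := by
  calc D ◁ lact φ Z ≫ lact φ Z
      = 𝟙 (D ⊗ (D ⊗ (M ⊗ Z))) ⊗≫ (D ◁ φ ≫ φ) ▷ Z ⊗≫ 𝟙 (M ⊗ Z) := by
        simp only [lact]; monoidal
    _ = 𝟙 (D ⊗ (D ⊗ (M ⊗ Z))) ⊗≫ ((α_ D D M).inv ≫ μ ▷ M ≫ φ) ▷ Z ⊗≫ 𝟙 (M ⊗ Z) := by
        rw [h]
    _ = lact μ (M ⊗ Z) ≫ lact φ Z := by simp only [lact]; monoidal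

lemma whisk_c45 {D M : C} (μ : D ⊗ D ⟶ D) (s : D ⊗ M ⟶ M ⊗ D)
    (h : ((α_ D D M).inv ≫ μ ▷ M) ≫ s = D ◁ s ≫ Wfst s D ≫ M ◁ μ) (Z : C) :
    lact μ (M ⊗ Z) ≫ Wfst s Z =
      D ◁ Wfst s Z ≫ Wfst s (D ⊗ Z) ≫ M ◁ lact μ Z := by
  calc lact μ (M ⊗ Z) ≫ Wfst s Z
      = 𝟙 (D ⊗ (D ⊗ (M ⊗ Z))) ⊗≫ (((α_ D D M).inv ≫ μ ▷ M) ≫ s) ▷ Z ⊗≫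
          𝟙 (M ⊗ (D ⊗ Z)) := by
        simp only [lact, Wfst]; monoidal
    _ = 𝟙 (D ⊗ (D ⊗ (M ⊗ Z))) ⊗≫ (D ◁ s ≫ Wfst s D ≫ M ◁ μ) ▷ Z ⊗≫
          𝟙 (M ⊗ (D ⊗ Z)) := by rw [h]
    _ = D ◁ Wfst s Z ≫ Wfst s (D ⊗ Z) ≫ M ◁ lact μ Z := by
        simp only [lact, Wfst]; monoidal

/-- The key consequence of (b4) and the unit laws: `δ∘η` is "grouplike up to t". -/
lemma lemA {D : C} (H : WBHA D) :
    (λ_ (𝟙_ C)).inv ≫ ((H.η ≫ H.δ) ⊗ₘ (H.η ≫ H.δ)) ≫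
      ((α_ D D (D ⊗ D)).hom ≫ D ◁ Wfst H.t D ≫ (α_ D D (D ⊗ D)).inv ≫ (H.μ ⊗ₘ H.μ)) =
    H.η ≫ H.δ := by
  have hu : (λ_ (𝟙_ C)).inv ≫ (H.η ⊗ₘ H.η) ≫ H.μ = H.η := by
    calc (λ_ (𝟙_ C)).inv ≫ (H.η ⊗ₘ H.η) ≫ H.μ
        = H.η ≫ ((ρ_ D).inv ≫ D ◁ H.η) ≫ H.μ := by
          rw [MonoidalCategory.tensorHom_def]
          simp only [← Category.assoc]; congr 1; monoidal
      _ = H.η ≫ unitHomR H.η D ≫ H.μ := by rw [unitHomR]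
      _ = H.η := by rw [H.unit_r, Category.comp_id]
  calc (λ_ (𝟙_ C)).inv ≫ ((H.η ≫ H.δ) ⊗ₘ (H.η ≫ H.δ)) ≫
        ((α_ D D (D ⊗ D)).hom ≫ D ◁ Wfst H.t D ≫ (α_ D D (D ⊗ D)).inv ≫ (H.μ ⊗ₘ H.μ))
      = (λ_ (𝟙_ C)).inv ≫ (H.η ⊗ₘ H.η) ≫
          ((H.δ ⊗ₘ H.δ) ≫ (α_ D D (D ⊗ D)).hom ≫ D ◁ Wfst H.t D ≫
            (α_ D D (D ⊗ D)).inv ≫ (H.μ ⊗ₘ H.μ)) := by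
        rw [← tensorHom_comp_tensorHom]; simp only [Category.assoc]
    _ = (λ_ (𝟙_ C)).inv ≫ (H.η ⊗ₘ H.η) ≫ H.μ ≫ H.δ := by rw [← H.b4]
    _ = ((λ_ (𝟙_ C)).inv ≫ (H.η ⊗ₘ H.η) ≫ H.μ) ≫ H.δ := by simp only [Category.assoc]
    _ = H.η ≫ H.δ := by rw [hu]

lemma lemF {A N : C} (k k' : 𝟙_ C ⟶ A) (Q : A ⊗ A ⟶ A) :
    (λ_ N).inv ≫ k ▷ N ≫ (λ_ (A ⊗ N)).inv ≫ k' ▷ (A ⊗ N) ≫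
      (α_ A A N).inv ≫ Q ▷ N =
    (λ_ N).inv ≫ ((λ_ (𝟙_ C)).inv ≫ (k' ⊗ₘ k) ≫ Q) ▷ N := by
  rw [tensorHom_def']
  monoidal

set_option maxHeartbeats 4000000 in
/-- The core computation: Lemma B. -/
lemma lemB {D M M' : C} (t : D ⊗ D ⟶ D ⊗ D) (μ : D ⊗ D ⟶ D)
    (s : D ⊗ M ⟶ M ⊗ D) (φ : D ⊗ M ⟶ M) (φ' : D ⊗ M' ⟶ M')
    (hs : D ◁ φ ≫ s = Wfst t M ≫ D ◁ s ≫ (α_ D M D).inv ≫ φ ▷ D)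
    (hassoc : D ◁ φ ≫ φ = (α_ D D M).inv ≫ μ ▷ M ≫ φ)
    (hassoc' : D ◁ φ' ≫ φ' = (α_ D D M').inv ≫ μ ▷ M' ≫ φ')
    (hc45 : ((α_ D D M).inv ≫ μ ▷ M) ≫ s = D ◁ s ≫ Wfst s D ≫ M ◁ μ) :
    (D ⊗ D) ◁ ((α_ D D (M ⊗ M')).hom ≫ D ◁ Wfst s M' ≫
        (α_ D M (D ⊗ M')).inv ≫ (φ ⊗ₘ φ')) ≫
      ((α_ D D (M ⊗ M')).hom ≫ D ◁ Wfst s M' ≫ (α_ D M (D ⊗ M')).inv ≫ (φ ⊗ₘ φ')) =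
    (α_ (D ⊗ D) (D ⊗ D) (M ⊗ M')).inv ≫
      ((α_ D D (D ⊗ D)).hom ≫ D ◁ Wfst t D ≫ (α_ D D (D ⊗ D)).inv ≫ (μ ⊗ₘ μ)) ▷
        (M ⊗ M') ≫
      ((α_ D D (M ⊗ M')).hom ≫ D ◁ Wfst s M' ≫ (α_ D M (D ⊗ M')).inv ≫ (φ ⊗ₘ φ')) := by
  calc (D ⊗ D) ◁ ((α_ D D (M ⊗ M')).hom ≫ D ◁ Wfst s M' ≫
        (α_ D M (D ⊗ M')).inv ≫ (φ ⊗ₘ φ')) ≫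
      ((α_ D D (M ⊗ M')).hom ≫ D ◁ Wfst s M' ≫ (α_ D M (D ⊗ M')).inv ≫ (φ ⊗ₘ φ'))
      -- T1 : slice form, inner φ' grouped with outer s for the exchange
      = 𝟙 ((D ⊗ D) ⊗ ((D ⊗ D) ⊗ (M ⊗ M'))) ⊗≫
          D ◁ (D ◁ (D ◁ Wfst s M')) ⊗≫
          D ◁ (D ◁ lact φ (D ⊗ M')) ⊗≫
          D ◁ (D ◁ (M ◁ φ') ≫ Wfst s M') ⊗≫
          lact φ (D ⊗ M') ⊗≫ M ◁ φ' ⊗≫ 𝟙 (M ⊗ M') := by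
        simp only [MonoidalCategory.tensorHom_def, lact, Wfst]; monoidal
    _ = 𝟙 ((D ⊗ D) ⊗ ((D ⊗ D) ⊗ (M ⊗ M'))) ⊗≫
          D ◁ (D ◁ (D ◁ Wfst s M')) ⊗≫
          D ◁ (D ◁ lact φ (D ⊗ M')) ⊗≫
          D ◁ (Wfst s (D ⊗ M') ≫ M ◁ (D ◁ φ')) ⊗≫
          lact φ (D ⊗ M') ⊗≫ M ◁ φ' ⊗≫ 𝟙 (M ⊗ M') := by
        rw [exchWfst s φ']
    -- regroup for hs (whiskered)
    _ = 𝟙 ((D ⊗ D) ⊗ ((D ⊗ D) ⊗ (M ⊗ M'))) ⊗≫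
          D ◁ (D ◁ (D ◁ Wfst s M')) ⊗≫
          D ◁ (D ◁ lact φ (D ⊗ M') ≫ Wfst s (D ⊗ M')) ⊗≫
          D ◁ (M ◁ (D ◁ φ')) ⊗≫
          lact φ (D ⊗ M') ⊗≫ M ◁ φ' ⊗≫ 𝟙 (M ⊗ M') := by
        simp only [lact, Wfst]; monoidal
    _ = 𝟙 ((D ⊗ D) ⊗ ((D ⊗ D) ⊗ (M ⊗ M'))) ⊗≫
          D ◁ (D ◁ (D ◁ Wfst s M')) ⊗≫
          D ◁ (Wfst t (M ⊗ (D ⊗ M')) ≫ D ◁ Wfst s (D ⊗ M') ≫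
            lact φ (D ⊗ (D ⊗ M'))) ⊗≫
          D ◁ (M ◁ (D ◁ φ')) ⊗≫
          lact φ (D ⊗ M') ⊗≫ M ◁ φ' ⊗≫ 𝟙 (M ⊗ M') := by
        rw [whisk_modCompatDM t φ s hs (D ⊗ M')]
    -- regroup for exch2 (move inner φ' past outer φ)
    _ = 𝟙 ((D ⊗ D) ⊗ ((D ⊗ D) ⊗ (M ⊗ M'))) ⊗≫
          D ◁ (D ◁ (D ◁ Wfst s M')) ⊗≫
          D ◁ Wfst t (M ⊗ (D ⊗ M')) ⊗≫
          D ◁ (D ◁ Wfst s (D ⊗ M')) ⊗≫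
          D ◁ lact φ (D ⊗ (D ⊗ M')) ⊗≫
          (D ◁ (M ◁ (D ◁ φ')) ≫ lact φ (D ⊗ M')) ⊗≫
          M ◁ φ' ⊗≫ 𝟙 (M ⊗ M') := by
        simp only [lact, Wfst]; monoidal
    _ = 𝟙 ((D ⊗ D) ⊗ ((D ⊗ D) ⊗ (M ⊗ M'))) ⊗≫
          D ◁ (D ◁ (D ◁ Wfst s M')) ⊗≫
          D ◁ Wfst t (M ⊗ (D ⊗ M')) ⊗≫
          D ◁ (D ◁ Wfst s (D ⊗ M')) ⊗≫
          D ◁ lact φ (D ⊗ (D ⊗ M')) ⊗≫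
          (lact φ (D ⊗ (D ⊗ M')) ≫ M ◁ (D ◁ φ')) ⊗≫
          M ◁ φ' ⊗≫ 𝟙 (M ⊗ M') := by
        rw [exch2 φ (D ◁ φ')]
    -- regroup for the module associativity of φ
    _ = 𝟙 ((D ⊗ D) ⊗ ((D ⊗ D) ⊗ (M ⊗ M'))) ⊗≫
          D ◁ (D ◁ (D ◁ Wfst s M')) ⊗≫
          D ◁ Wfst t (M ⊗ (D ⊗ M')) ⊗≫
          D ◁ (D ◁ Wfst s (D ⊗ M')) ⊗≫
          (D ◁ lact φ (D ⊗ (D ⊗ M')) ≫ lact φ (D ⊗ (D ⊗ M'))) ⊗≫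
          (M ◁ (D ◁ φ' ≫ φ')) ⊗≫ 𝟙 (M ⊗ M') := by
        simp only [lact, Wfst, MonoidalCategory.whiskerLeft_comp]; monoidal
    _ = 𝟙 ((D ⊗ D) ⊗ ((D ⊗ D) ⊗ (M ⊗ M'))) ⊗≫
          D ◁ (D ◁ (D ◁ Wfst s M')) ⊗≫
          D ◁ Wfst t (M ⊗ (D ⊗ M')) ⊗≫
          D ◁ (D ◁ Wfst s (D ⊗ M')) ⊗≫
          (lact μ (M ⊗ (D ⊗ (D ⊗ M'))) ≫ lact φ (D ⊗ (D ⊗ M'))) ⊗≫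
          (M ◁ ((α_ D D M').inv ≫ μ ▷ M' ≫ φ')) ⊗≫ 𝟙 (M ⊗ M') := by
        rw [whisk_assoc μ φ hassoc (D ⊗ (D ⊗ M')), hassoc']
    -- regroup: exchange φ with the μ acting on the right wires
    _ = 𝟙 ((D ⊗ D) ⊗ ((D ⊗ D) ⊗ (M ⊗ M'))) ⊗≫
          D ◁ (D ◁ (D ◁ Wfst s M')) ⊗≫
          D ◁ Wfst t (M ⊗ (D ⊗ M')) ⊗≫
          D ◁ (D ◁ Wfst s (D ⊗ M')) ⊗≫
          lact μ (M ⊗ (D ⊗ (D ⊗ M'))) ⊗≫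
          (lact φ (D ⊗ (D ⊗ M')) ≫ M ◁ lact μ M') ⊗≫
          M ◁ φ' ⊗≫ 𝟙 (M ⊗ M') := by
        simp only [lact, Wfst, MonoidalCategory.whiskerLeft_comp]; monoidal
    _ = 𝟙 ((D ⊗ D) ⊗ ((D ⊗ D) ⊗ (M ⊗ M'))) ⊗≫
          D ◁ (D ◁ (D ◁ Wfst s M')) ⊗≫
          D ◁ Wfst t (M ⊗ (D ⊗ M')) ⊗≫
          D ◁ (D ◁ Wfst s (D ⊗ M')) ⊗≫
          lact μ (M ⊗ (D ⊗ (D ⊗ M'))) ⊗≫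
          (D ◁ (M ◁ lact μ M') ≫ lact φ (D ⊗ M')) ⊗≫
          M ◁ φ' ⊗≫ 𝟙 (M ⊗ M') := by
        rw [← exch2 φ (lact μ M')]
    -- regroup: exchange the outer μ with the inner μ
    _ = 𝟙 ((D ⊗ D) ⊗ ((D ⊗ D) ⊗ (M ⊗ M'))) ⊗≫
          D ◁ (D ◁ (D ◁ Wfst s M')) ⊗≫
          D ◁ Wfst t (M ⊗ (D ⊗ M')) ⊗≫
          D ◁ (D ◁ Wfst s (D ⊗ M')) ⊗≫
          (lact μ (M ⊗ (D ⊗ (D ⊗ M'))) ≫ D ◁ (M ◁ lact μ M')) ⊗≫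
          lact φ (D ⊗ M') ⊗≫ M ◁ φ' ⊗≫ 𝟙 (M ⊗ M') := by
        simp only [lact, Wfst]; monoidal
    _ = 𝟙 ((D ⊗ D) ⊗ ((D ⊗ D) ⊗ (M ⊗ M'))) ⊗≫
          D ◁ (D ◁ (D ◁ Wfst s M')) ⊗≫
          D ◁ Wfst t (M ⊗ (D ⊗ M')) ⊗≫
          D ◁ (D ◁ Wfst s (D ⊗ M')) ⊗≫
          (D ◁ (D ◁ (M ◁ lact μ M')) ≫ lact μ (M ⊗ (D ⊗ M'))) ⊗≫
          lact φ (D ⊗ M') ⊗≫ M ◁ φ' ⊗≫ 𝟙 (M ⊗ M') := by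
        rw [← exch2 μ (M ◁ lact μ M')]
    -- regroup: exchange t with the innermost s
    _ = 𝟙 ((D ⊗ D) ⊗ ((D ⊗ D) ⊗ (M ⊗ M'))) ⊗≫
          D ◁ (D ◁ (D ◁ Wfst s M') ≫ Wfst t (M ⊗ (D ⊗ M'))) ⊗≫
          D ◁ (D ◁ Wfst s (D ⊗ M')) ⊗≫
          D ◁ (D ◁ (M ◁ lact μ M')) ⊗≫
          lact μ (M ⊗ (D ⊗ M')) ⊗≫
          lact φ (D ⊗ M') ⊗≫ M ◁ φ' ⊗≫ 𝟙 (M ⊗ M') := by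
        simp only [lact, Wfst, MonoidalCategory.whiskerLeft_comp]; monoidal
    _ = 𝟙 ((D ⊗ D) ⊗ ((D ⊗ D) ⊗ (M ⊗ M'))) ⊗≫
          D ◁ (Wfst t (D ⊗ (M ⊗ M')) ≫ D ◁ (D ◁ Wfst s M')) ⊗≫
          D ◁ (D ◁ Wfst s (D ⊗ M')) ⊗≫
          D ◁ (D ◁ (M ◁ lact μ M')) ⊗≫
          lact μ (M ⊗ (D ⊗ M')) ⊗≫
          lact φ (D ⊗ M') ⊗≫ M ◁ φ' ⊗≫ 𝟙 (M ⊗ M') := by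
        rw [← exchWfst t (Wfst s M')]
    -- regroup for (c4-5)
    _ = 𝟙 ((D ⊗ D) ⊗ ((D ⊗ D) ⊗ (M ⊗ M'))) ⊗≫
          D ◁ Wfst t (D ⊗ (M ⊗ M')) ⊗≫
          D ◁ (D ◁ (D ◁ Wfst s M' ≫ Wfst s (D ⊗ M') ≫ M ◁ lact μ M')) ⊗≫
          lact μ (M ⊗ (D ⊗ M')) ⊗≫
          lact φ (D ⊗ M') ⊗≫ M ◁ φ' ⊗≫ 𝟙 (M ⊗ M') := by
        simp only [lact, Wfst, MonoidalCategory.whiskerLeft_comp]; monoidal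
    _ = 𝟙 ((D ⊗ D) ⊗ ((D ⊗ D) ⊗ (M ⊗ M'))) ⊗≫
          D ◁ Wfst t (D ⊗ (M ⊗ M')) ⊗≫
          D ◁ (D ◁ (lact μ (M ⊗ M') ≫ Wfst s M')) ⊗≫
          lact μ (M ⊗ (D ⊗ M')) ⊗≫
          lact φ (D ⊗ M') ⊗≫ M ◁ φ' ⊗≫ 𝟙 (M ⊗ M') := by
        rw [← whisk_c45 μ s hc45 M']
    -- regroup: exchange the first μ past the second μ and s
    _ = 𝟙 ((D ⊗ D) ⊗ ((D ⊗ D) ⊗ (M ⊗ M'))) ⊗≫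
          D ◁ Wfst t (D ⊗ (M ⊗ M')) ⊗≫
          (D ◁ (D ◁ (lact μ (M ⊗ M') ≫ Wfst s M')) ≫ lact μ (M ⊗ (D ⊗ M'))) ⊗≫
          lact φ (D ⊗ M') ⊗≫ M ◁ φ' ⊗≫ 𝟙 (M ⊗ M') := by
        simp only [lact, Wfst]; monoidal
    _ = 𝟙 ((D ⊗ D) ⊗ ((D ⊗ D) ⊗ (M ⊗ M'))) ⊗≫
          D ◁ Wfst t (D ⊗ (M ⊗ M')) ⊗≫
          (lact μ (D ⊗ (D ⊗ (M ⊗ M'))) ≫ D ◁ (lact μ (M ⊗ M') ≫ Wfst s M')) ⊗≫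
          lact φ (D ⊗ M') ⊗≫ M ◁ φ' ⊗≫ 𝟙 (M ⊗ M') := by
        rw [← exch2 μ (lact μ (M ⊗ M') ≫ Wfst s M')]
    _ = (α_ (D ⊗ D) (D ⊗ D) (M ⊗ M')).inv ≫
          ((α_ D D (D ⊗ D)).hom ≫ D ◁ Wfst t D ≫ (α_ D D (D ⊗ D)).inv ≫ (μ ⊗ₘ μ)) ▷
            (M ⊗ M') ≫
          ((α_ D D (M ⊗ M')).hom ≫ D ◁ Wfst s M' ≫ (α_ D M (D ⊗ M')).inv ≫
            (φ ⊗ₘ φ')) := by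
        simp only [MonoidalCategory.tensorHom_def, lact, Wfst, MonoidalCategory.whiskerLeft_comp,
          comp_whiskerRight]; monoidal

end AuxNabla

set_option maxHeartbeats 4000000 in
/-- For left `D`-modules `(M,φM)`, `(M',φM')` with weak operators compatible with
the module structures, the morphism
`∇_{M⊗M'} = (φM⊗φM')∘(D⊗s_M⊗M')∘((δ∘η)⊗M⊗M')` is idempotent. -/
theorem nabla_tensor_idempotent {D : C} (H : WBHA D) (M M' : C)
    (w : WeakOperator H M) (w' : WeakOperator H M')
    (φM : D ⊗ M ⟶ M) (φM' : D ⊗ M' ⟶ M')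
    (hMunit : unitHomL H.η M ≫ φM = 𝟙 M)
    (hMassoc : D ◁ φM ≫ φM = (α_ D D M).inv ≫ H.μ ▷ M ≫ φM)
    (hM'unit : unitHomL H.η M' ≫ φM' = 𝟙 M')
    (hM'assoc : D ◁ φM' ≫ φM' = (α_ D D M').inv ≫ H.μ ▷ M' ≫ φM')
    (hMr : modCompatMD H.t φM w.r) (hMr' : modCompatDM H.t' φM w.r')
    (hMs : modCompatDM H.t φM w.s) (hMs' : modCompatMD H.t' φM w.s')
    (hM'r : modCompatMD H.t φM' w'.r) (hM'r' : modCompatDM H.t' φM' w'.r')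
    (hM's : modCompatDM H.t φM' w'.s) (hM's' : modCompatMD H.t' φM' w'.s') :
    ((λ_ (M ⊗ M')).inv ≫ (H.η ≫ H.δ) ▷ (M ⊗ M') ≫ (α_ D D (M ⊗ M')).hom ≫
        D ◁ Wfst w.s M' ≫ (α_ D M (D ⊗ M')).inv ≫ (φM ⊗ₘ φM')) ≫
      ((λ_ (M ⊗ M')).inv ≫ (H.η ≫ H.δ) ▷ (M ⊗ M') ≫ (α_ D D (M ⊗ M')).hom ≫
        D ◁ Wfst w.s M' ≫ (α_ D M (D ⊗ M')).inv ≫ (φM ⊗ₘ φM')) =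
    (λ_ (M ⊗ M')).inv ≫ (H.η ≫ H.δ) ▷ (M ⊗ M') ≫ (α_ D D (M ⊗ M')).hom ≫
        D ◁ Wfst w.s M' ≫ (α_ D M (D ⊗ M')).inv ≫ (φM ⊗ₘ φM') := by
  have hs : D ◁ φM ≫ w.s = Wfst H.t M ≫ D ◁ w.s ≫ (α_ D M D).inv ≫ φM ▷ D := hMs
  have nat' : ∀ {X Y : C} (f : X ⟶ Y) {Z : C} (g : (D ⊗ D) ⊗ Y ⟶ Z),
      f ≫ (λ_ Y).inv ≫ (H.η ≫ H.δ) ▷ Y ≫ g =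
        (λ_ X).inv ≫ (H.η ≫ H.δ) ▷ X ≫ (D ⊗ D) ◁ f ≫ g := by
    intro X Y f Z g
    rw [leftUnitor_inv_naturality_assoc, whisker_exchange_assoc]
  calc ((λ_ (M ⊗ M')).inv ≫ (H.η ≫ H.δ) ▷ (M ⊗ M') ≫ (α_ D D (M ⊗ M')).hom ≫
        D ◁ Wfst w.s M' ≫ (α_ D M (D ⊗ M')).inv ≫ (φM ⊗ₘ φM')) ≫
      ((λ_ (M ⊗ M')).inv ≫ (H.η ≫ H.δ) ▷ (M ⊗ M') ≫ (α_ D D (M ⊗ M')).hom ≫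
        D ◁ Wfst w.s M' ≫ (α_ D M (D ⊗ M')).inv ≫ (φM ⊗ₘ φM'))
      = (λ_ (M ⊗ M')).inv ≫ (H.η ≫ H.δ) ▷ (M ⊗ M') ≫
          (λ_ ((D ⊗ D) ⊗ (M ⊗ M'))).inv ≫ (H.η ≫ H.δ) ▷ ((D ⊗ D) ⊗ (M ⊗ M')) ≫
          ((D ⊗ D) ◁ ((α_ D D (M ⊗ M')).hom ≫ D ◁ Wfst w.s M' ≫
              (α_ D M (D ⊗ M')).inv ≫ (φM ⊗ₘ φM')) ≫
            ((α_ D D (M ⊗ M')).hom ≫ D ◁ Wfst w.s M' ≫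
              (α_ D M (D ⊗ M')).inv ≫ (φM ⊗ₘ φM'))) := by
        simp only [Category.assoc]
        rw [nat', nat', nat', nat']
        simp only [MonoidalCategory.whiskerLeft_comp, Category.assoc]
    _ = (λ_ (M ⊗ M')).inv ≫ (H.η ≫ H.δ) ▷ (M ⊗ M') ≫
          (λ_ ((D ⊗ D) ⊗ (M ⊗ M'))).inv ≫ (H.η ≫ H.δ) ▷ ((D ⊗ D) ⊗ (M ⊗ M')) ≫
          ((α_ (D ⊗ D) (D ⊗ D) (M ⊗ M')).inv ≫
            ((α_ D D (D ⊗ D)).hom ≫ D ◁ Wfst H.t D ≫ (α_ D D (D ⊗ D)).inv ≫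
              (H.μ ⊗ₘ H.μ)) ▷ (M ⊗ M') ≫
            ((α_ D D (M ⊗ M')).hom ≫ D ◁ Wfst w.s M' ≫
              (α_ D M (D ⊗ M')).inv ≫ (φM ⊗ₘ φM'))) := by
        rw [lemB H.t H.μ w.s φM φM' hs hMassoc hM'assoc w.c45]
    _ = ((λ_ (M ⊗ M')).inv ≫ (H.η ≫ H.δ) ▷ (M ⊗ M') ≫
          (λ_ ((D ⊗ D) ⊗ (M ⊗ M'))).inv ≫ (H.η ≫ H.δ) ▷ ((D ⊗ D) ⊗ (M ⊗ M')) ≫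
          (α_ (D ⊗ D) (D ⊗ D) (M ⊗ M')).inv ≫
            ((α_ D D (D ⊗ D)).hom ≫ D ◁ Wfst H.t D ≫ (α_ D D (D ⊗ D)).inv ≫
              (H.μ ⊗ₘ H.μ)) ▷ (M ⊗ M')) ≫
          ((α_ D D (M ⊗ M')).hom ≫ D ◁ Wfst w.s M' ≫
            (α_ D M (D ⊗ M')).inv ≫ (φM ⊗ₘ φM')) := by
        simp only [Category.assoc]
    _ = ((λ_ (M ⊗ M')).inv ≫
          ((λ_ (𝟙_ C)).inv ≫ ((H.η ≫ H.δ) ⊗ₘ (H.η ≫ H.δ)) ≫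
            ((α_ D D (D ⊗ D)).hom ≫ D ◁ Wfst H.t D ≫ (α_ D D (D ⊗ D)).inv ≫
              (H.μ ⊗ₘ H.μ))) ▷ (M ⊗ M')) ≫
          ((α_ D D (M ⊗ M')).hom ≫ D ◁ Wfst w.s M' ≫
            (α_ D M (D ⊗ M')).inv ≫ (φM ⊗ₘ φM')) := by
        rw [lemF (H.η ≫ H.δ) (H.η ≫ H.δ)
          ((α_ D D (D ⊗ D)).hom ≫ D ◁ Wfst H.t D ≫ (α_ D D (D ⊗ D)).inv ≫
            (H.μ ⊗ₘ H.μ))]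
    _ = ((λ_ (M ⊗ M')).inv ≫ (H.η ≫ H.δ) ▷ (M ⊗ M')) ≫
          ((α_ D D (M ⊗ M')).hom ≫ D ◁ Wfst w.s M' ≫
            (α_ D M (D ⊗ M')).inv ≫ (φM ⊗ₘ φM')) := by
        rw [lemA H]
    _ = (λ_ (M ⊗ M')).inv ≫ (H.η ≫ H.δ) ▷ (M ⊗ M') ≫ (α_ D D (M ⊗ M')).hom ≫
          D ◁ Wfst w.s M' ≫ (α_ D M (D ⊗ M')).inv ≫ (φM ⊗ₘ φM') := by
        simp only [Category.assoc]
end
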